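/- An unordered word w belongs to the language of a disjunctive multiplicity expression E if and only if w is consistent with the characterizing triple (C_E, N_E, P_E), i.e., (1) for every pair (a,b) in C_E, not both a and b occur in w; (2) for every symbol a, (a, w(a)) ∈ N_E; (3) for every set X ∈ P_E, some symbol of X occurs in w. -/

import Mathlib

open scoped Classical

variable {α : Type}

/-- Unordered words: multisets of symbols, as occurrence-count functions. -/
abbrev UWord (α : Type) := α → ℕ

/-- Multiplicities `*`, `+`, `?`, `0`, `1`. -/
inductive Mult : Type where
  | zero | one | opt | plus | star
deriving DecidableEq

/-- Interpretation of multiplicities as sets of natural numbers. -/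
def Mult.sem : Mult → Set ℕ
  | .zero => {0}
  | .one => {1}
  | .opt => {0, 1}
  | .plus => {n | 0 < n}
  | .star => Set.univ

/-- A disjunction `a₁^{M₁} | … | a_k^{M_k}`. -/
abbrev Disj (α : Type) := List (α × Mult)

/-- A disjunctive multiplicity expression `D₁^{M₁} ⊎ … ⊎ D_n^{M_n}`. -/
abbrev DME (α : Type) := List (Disj α × Mult)

/-- Language of `a^M`. -/
def singleLang (a : α) (m : Mult) : Set (UWord α) :=
  {w | w a ∈ m.sem ∧ ∀ b, b ≠ a → w b = 0}

/-- Language of a disjunction. -/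
def disjLang (D : Disj α) : Set (UWord α) :=
  {w | ∃ p ∈ D, w ∈ singleLang p.1 p.2}

/-- Pointwise (multiset) sum of a list of unordered words. -/
def sumWords (ws : List (UWord α)) : UWord α := fun a => (ws.map (fun u => u a)).sum

/-- Language of `D^M`. -/
def powLang (L : Set (UWord α)) (m : Mult) : Set (UWord α) :=
  {w | ∃ ws : List (UWord α), ws.length ∈ m.sem ∧ (∀ u ∈ ws, u ∈ L) ∧ w = sumWords ws}

/-- Language of a disjunctive multiplicity expression. -/
def dmeLang (E : DME α) : Set (UWord α) :=
  {w | ∃ ws : List (UWord α),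
      List.Forall₂ (fun p u => u ∈ powLang (disjLang p.1) p.2) E ws ∧ w = sumWords ws}

/-- Symbols occurring in a disjunctive multiplicity expression. -/
def dmeSymbols (E : DME α) : List α := E.flatMap (fun p => p.1.map Prod.fst)

/-- Normalized disjunctive multiplicity expression (each symbol occurs at most once,
each disjunction nonempty, and the two normal-form conditions of the paper). -/
def Normalized (E : DME α) : Prop :=
  (dmeSymbols E).Nodup ∧
  ∀ p ∈ E, p.1 ≠ [] ∧
    (p.2 ≠ Mult.one → p.2 = Mult.plus ∧ ∀ q ∈ p.1, q.2 = Mult.one) ∧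
    ((∃ q ∈ p.1, (0 : ℕ) ∈ q.2.sem) → ∀ q ∈ p.1, (0 : ℕ) ∈ q.2.sem)

/-- Conflicting pairs of siblings `C_E`. -/
def CE (E : DME α) : Set (α × α) :=
  {p | ¬ ∃ w ∈ dmeLang E, w p.1 ≠ 0 ∧ w p.2 ≠ 0}

/-- Extended cardinality map `N_E`. -/
def NE (E : DME α) : Set (α × ℕ) :=
  {p | ∃ w ∈ dmeLang E, w p.1 = p.2}

/-- Sets of required symbols `P_E`. -/
def PE (E : DME α) : Set (Set α) :=
  {X | ∀ w ∈ dmeLang E, ∃ a ∈ X, w a ≠ 0}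

/-- Consistency of an unordered word with a characterizing triple. -/
def ConsTriple (w : UWord α) (C : Set (α × α)) (N : Set (α × ℕ)) (P : Set (Set α)) : Prop :=
  (∀ p ∈ C, ¬ (w p.1 ≠ 0 ∧ w p.2 ≠ 0)) ∧
  (∀ a, (a, w a) ∈ N) ∧
  (∀ X ∈ P, ∃ a ∈ X, w a ≠ 0)

/-- Language of a disjunction-free multiplicity expression given as a list of
symbol/multiplicity pairs. -/
def dfLang (l : List (α × Mult)) : Set (UWord α) :=
  {w | (∀ p ∈ l, w p.1 ∈ p.2.sem) ∧ ∀ b, b ∉ l.map Prod.fst → w b = 0}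

/-- Finite unordered trees. -/
inductive UTree (α : Type) : Type where
  | node : α → List (UTree α) → UTree α

def UTree.lab : UTree α → α | .node a _ => a

def UTree.children : UTree α → List (UTree α) | .node _ ts => ts

/-- Twig queries: labels in `Σ ∪ {⋆}` (wildcard = `none`); each child subquery is tagged
with `false` for a child edge and `true` for a descendant edge. -/
inductive Twig (α : Type) : Type where
  | node : Option α → List (Twig α × Bool) → Twig α

/-- Proper subtree (proper descendant) relation. -/
inductive StrictDesc : UTree α → UTree α → Prop where
  | child {s t : UTree α} : s ∈ t.children → StrictDesc s t
  | step {s u t : UTree α} : StrictDesc s u → u ∈ t.children → StrictDesc s t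

/-- `Sat t q`: the twig query `q` can be embedded in the tree `t`
(root to root, child edges to child edges, descendant edges to proper descendants,
labels preserved up to wildcard). -/
def Sat : UTree α → Twig α → Prop
  | t, .node l qs =>
      (∀ x ∈ l, x = t.lab) ∧
      ∀ p ∈ qs, (p.2 = false → ∃ t' ∈ t.children, Sat t' p.1) ∧
                (p.2 = true → ∃ t', StrictDesc t' t ∧ Sat t' p.1)
termination_by t q => sizeOf q
decreasing_by
  all_goals
    obtain ⟨q', b'⟩ := p
    have h1 : sizeOf ((q', b') : Twig α × Bool) < sizeOf qs := List.sizeOf_lt_of_mem (by assumption)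
    simp at h1 ⊢
    omega

/-- `TEmb t' t` : the tree `t'` can be embedded in the tree `t` (root-, child-, and
label-preserving). -/
def TEmb : UTree α → UTree α → Prop
  | .node a ts', t => t.lab = a ∧ ∀ s' ∈ ts', ∃ s ∈ t.children, TEmb s' s

/-- `QGEmb E a q` : the twig query `q` can be embedded in the rooted graph with edge
relation `E` at root `a`. -/
def QGEmb (E : α → α → Prop) : α → Twig α → Prop
  | a, .node l qs =>
      (∀ x ∈ l, x = a) ∧
      ∀ p ∈ qs, (p.2 = false → ∃ b, E a b ∧ QGEmb E b p.1) ∧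
                (p.2 = true → ∃ b, Relation.TransGen E a b ∧ QGEmb E b p.1)
termination_by a q => sizeOf q
decreasing_by
  all_goals
    obtain ⟨q', b'⟩ := p
    have h1 : sizeOf ((q', b') : Twig α × Bool) < sizeOf qs := List.sizeOf_lt_of_mem (by assumption)
    simp at h1 ⊢
    omega

/-- Labeled paths of a tree: sequences of labels along root-to-node paths. -/
inductive IsLabPath : UTree α → List α → Prop where
  | root {a : α} {ts : List (UTree α)} : IsLabPath (UTree.node a ts) [a]
  | cons {a : α} {ts : List (UTree α)} {s : UTree α} {p : List α} :
      s ∈ ts → IsLabPath s p → IsLabPath (UTree.node a ts) (a :: p)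

/-- Paths of a rooted graph: nonempty vertex sequences starting at the root and
following edges. -/
def IsGPath (E : α → α → Prop) (root : α) (p : List α) : Prop :=
  p ≠ [] ∧ p.head? = some root ∧ p.Chain' E

/-- The unfolding of a rooted graph, truncated at depth `n`.  For a graph with no cycle
reachable from the root, taking `n = Fintype.card α` yields the full unfolding. -/
noncomputable def unfoldG [Fintype α] (E : α → α → Prop) : ℕ → α → UTree α
  | 0, a => .node a []
  | n + 1, a => .node a (((Finset.univ.filter fun b => E a b).toList).map (unfoldG E n))

/-- Number of leaves of a tree. -/
def leafCount : UTree α → ℕ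
  | .node _ ts => if ts.isEmpty then 1 else (ts.attach.map (fun s => leafCount s.1)).sum
decreasing_by
  have h1 := List.sizeOf_lt_of_mem s.2
  simp
  omega

/-- Disjunction-free multiplicity schema: a root label together with, for each label `a`,
a disjunction-free multiplicity expression given as the multiplicity `R a b` of every
symbol `b` (`Mult.zero` meaning `b` does not occur). -/
structure MS (α : Type) where
  root : α
  R : α → α → Mult

/-- Every node's children-label multiset matches the rule for the node's label. -/
inductive LocalOK [DecidableEq α] (R : α → α → Mult) : UTree α → Prop where
  | node {a : α} {ts : List (UTree α)} :
      (∀ b, ((ts.map UTree.lab).count b) ∈ (R a b).sem) →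
      (∀ s ∈ ts, LocalOK R s) →
      LocalOK R (UTree.node a ts)

/-- A tree satisfies a disjunction-free multiplicity schema. -/
def SatS [DecidableEq α] (S : MS α) (t : UTree α) : Prop :=
  t.lab = S.root ∧ LocalOK S.R t

/-- Edges of the universal dependency graph: `b` occurs in `R a` with multiplicity `+` or `1`. -/
def uEdge (S : MS α) (a b : α) : Prop := S.R a b = Mult.plus ∨ S.R a b = Mult.one

/-- Edges of the dependency graph: `b` occurs in `R a` with multiplicity in `{*,+,?,1}`. -/
def dEdge (S : MS α) (a b : α) : Prop := S.R a b ≠ Mult.zero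

/-- A simulation of the rooted graph `(α, root, E)` in the tree `t`. -/
def IsSimulation (E : α → α → Prop) (root : α) (t : UTree α) (R : α → UTree α → Prop) : Prop :=
  R root t ∧ (∀ a s, R a s → s.lab = a) ∧
  (∀ a s, R a s → ∀ b, E a b → ∃ s' ∈ s.children, R b s')

/-- One fuse step: two sibling nodes with the same label are merged into a single node
whose children are the children of both (applied anywhere in the tree). -/
inductive Fuse : UTree α → UTree α → Prop where
  | here {a b : α} {l₁ l₂ l₃ cs₁ cs₂ : List (UTree α)} :
      Fuse (UTree.node a (l₁ ++ UTree.node b cs₁ :: l₂ ++ UTree.node b cs₂ :: l₃))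
           (UTree.node a (l₁ ++ UTree.node b (cs₁ ++ cs₂) :: l₂ ++ l₃))
  | there {a : α} {s s' : UTree α} {l₁ l₂ : List (UTree α)} :
      Fuse s s' → Fuse (UTree.node a (l₁ ++ s :: l₂)) (UTree.node a (l₁ ++ s' :: l₂))

/-- One add step: an arbitrary new subtree is attached as an additional child of some
node of the tree. -/
inductive AddOp : UTree α → UTree α → Prop where
  | here {a : α} {s : UTree α} {l : List (UTree α)} :
      AddOp (UTree.node a l) (UTree.node a (s :: l))
  | there {a : α} {s s' : UTree α} {l₁ l₂ : List (UTree α)} :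
      AddOp s s' → AddOp (UTree.node a (l₁ ++ s :: l₂)) (UTree.node a (l₁ ++ s' :: l₂))

-- AUX START
noncomputable def restrW (s : List α) (w : UWord α) : UWord α :=
  fun b => if b ∈ s then w b else 0

lemma restrW_pos {s : List α} {w : UWord α} {b : α} (h : b ∈ s) : restrW s w b = w b :=
  if_pos h

lemma restrW_neg {s : List α} {w : UWord α} {b : α} (h : b ∉ s) : restrW s w b = 0 :=
  if_neg h

lemma powLang_support {D : Disj α} {m : Mult} {u : UWord α}
    (hu : u ∈ powLang (disjLang D) m) {b : α} (hb : b ∉ D.map Prod.fst) : u b = 0 := by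
  obtain ⟨ws, -, hws, rfl⟩ := hu
  apply List.sum_eq_zero
  intro x hx
  simp only [List.mem_map] at hx
  obtain ⟨v, hv, rfl⟩ := hx
  obtain ⟨⟨a, m'⟩, hp, hv2⟩ := hws v hv
  exact hv2.2 b (fun h => hb (h ▸ List.mem_map_of_mem (f := Prod.fst) hp))

lemma sumWords_cons (u : UWord α) (ws : List (UWord α)) (b : α) :
    sumWords (u :: ws) b = u b + sumWords ws b := by simp [sumWords]

lemma powLang_one {D : Disj α} {u : UWord α} :
    u ∈ powLang (disjLang D) Mult.one ↔ u ∈ disjLang D := by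
  constructor
  · rintro ⟨ws, hlen, hmem, rfl⟩
    simp only [Mult.sem, Set.mem_singleton_iff] at hlen
    obtain ⟨v, rfl⟩ := List.length_eq_one_iff.mp hlen
    have : sumWords [v] = v := by funext b; simp [sumWords]
    rw [this]
    exact hmem v (by simp)
  · intro h
    exact ⟨[u], by simp [Mult.sem], by simpa using h, by funext b; simp [sumWords]⟩

lemma sum_delta (l : List (α × Mult)) (hnd : (l.map Prod.fst).Nodup) (u : UWord α) (b : α) :
    (l.map (fun q => if b = q.1 then u q.1 else 0)).sum
      = if b ∈ l.map Prod.fst then u b else 0 := by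
  induction l with
  | nil => simp
  | cons q l ih =>
    simp only [List.map_cons, List.nodup_cons] at hnd ⊢
    rw [List.sum_cons, ih hnd.2]
    by_cases hb : b = q.1
    · subst hb
      simp [hnd.1]
    · simp [hb, Ne.symm hb]

lemma sum_flatMap_nat {β : Type} (l : List β) (f : β → List ℕ) :
    (l.flatMap f).sum = (l.map (fun x => (f x).sum)).sum := by
  induction l with
  | nil => simp
  | cons x l ih => simp [List.flatMap_cons, ih]

lemma powLang_plus {D : Disj α} (hD : ∀ q ∈ D, q.2 = Mult.one)
    (hnd : (D.map Prod.fst).Nodup) {u : UWord α} :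
    u ∈ powLang (disjLang D) Mult.plus ↔
      ((∀ b, b ∉ D.map Prod.fst → u b = 0) ∧ ∃ a ∈ D.map Prod.fst, u a ≠ 0) := by
  constructor
  · rintro ⟨ws, hlen, hmem, rfl⟩
    refine ⟨fun b hb => powLang_support ⟨ws, hlen, hmem, rfl⟩ hb, ?_⟩
    simp only [Mult.sem, Set.mem_setOf_eq] at hlen
    obtain ⟨v, hv⟩ := List.exists_mem_of_length_pos hlen
    obtain ⟨⟨a, m'⟩, hp, hv2⟩ := hmem v hv
    refine ⟨a, List.mem_map_of_mem (f := Prod.fst) hp, ?_⟩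
    have h1 : v a = 1 := by
      have := hv2.1
      rw [hD ⟨a, m'⟩ hp] at this
      simpa [Mult.sem] using this
    have hle : v a ≤ sumWords ws a := by
      apply List.single_le_sum (by intro x _; exact Nat.zero_le x)
      exact List.mem_map_of_mem hv
    omega
  · rintro ⟨hsupp, a, ha, hne⟩
    refine ⟨D.flatMap (fun q => List.replicate (u q.1) (fun b => if b = q.1 then 1 else 0)),
      ?_, ?_, ?_⟩
    · simp only [Mult.sem, Set.mem_setOf_eq, List.length_pos_iff]
      intro hnil
      obtain ⟨⟨a', m'⟩, hq, rfl⟩ := List.mem_map.mp ha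
      have : (fun b => if b = a' then 1 else 0) ∈
          D.flatMap (fun q => List.replicate (u q.1) (fun b => if b = q.1 then 1 else 0)) := by
        apply List.mem_flatMap.mpr
        exact ⟨⟨a', m'⟩, hq, List.mem_replicate.mpr ⟨hne, rfl⟩⟩
      rw [hnil] at this
      exact absurd this List.not_mem_nil
    · intro v hv
      obtain ⟨q, hq, hv2⟩ := List.mem_flatMap.mp hv
      have := (List.mem_replicate.mp hv2).2
      subst this
      exact ⟨q, hq, by simp [singleLang, hD q hq, Mult.sem], fun b hb => by simp [hb]⟩
    · funext b
      show u b = sumWords _ b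
      simp only [sumWords, List.map_flatMap]
      rw [sum_flatMap_nat]
      have heq : ∀ q ∈ D, ((List.replicate (u q.1)
            (fun c => if c = q.1 then 1 else 0)).map (fun v => v b)).sum
          = (if b = q.1 then u q.1 else 0) := by
        intro q _
        simp only [List.map_replicate, List.sum_replicate, smul_eq_mul]
        by_cases hb : b = q.1 <;> simp [hb]
      rw [List.map_congr_left heq, sum_delta D hnd u b]
      by_cases hb : b ∈ D.map Prod.fst
      · simp [hb]
      · simp [hb, hsupp b hb]

lemma dmeLang_iff (E : DME α) (hnd : (dmeSymbols E).Nodup) (w : UWord α) :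
    w ∈ dmeLang E ↔
      ((∀ b, b ∉ dmeSymbols E → w b = 0) ∧
       ∀ p ∈ E, restrW (p.1.map Prod.fst) w ∈ powLang (disjLang p.1) p.2) := by
  induction E generalizing w with
  | nil =>
    constructor
    · rintro ⟨ws, h2, rfl⟩
      cases h2
      exact ⟨fun b _ => by simp [sumWords], by simp⟩
    · rintro ⟨h1, -⟩
      exact ⟨[], List.Forall₂.nil,
        funext fun b => by simpa [sumWords] using h1 b (by simp [dmeSymbols])⟩
  | cons p E ih =>
    have hnd' : (dmeSymbols (p :: E)) = p.1.map Prod.fst ++ dmeSymbols E := by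
      simp [dmeSymbols]
    rw [hnd'] at hnd
    obtain ⟨hnd1, hnd2, hdisj⟩ := List.nodup_append.mp hnd
    constructor
    · rintro ⟨ws, h2, rfl⟩
      cases h2 with
      | cons hu hws =>
        rename_i u ws'
        have hv : sumWords ws' ∈ dmeLang E := ⟨ws', hws, rfl⟩
        obtain ⟨hv1, hv2⟩ := (ih hnd2 (sumWords ws')).mp hv
        constructor
        · intro b hb
          rw [hnd'] at hb
          simp only [List.mem_append] at hb
          push_neg at hb
          rw [sumWords_cons, powLang_support hu hb.1, hv1 b hb.2]
        · intro q hq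
          rcases List.mem_cons.mp hq with rfl | hq'
          · have heq : restrW (q.1.map Prod.fst) (sumWords (u :: ws')) = u := by
              funext b
              by_cases hb : b ∈ q.1.map Prod.fst
              · rw [restrW_pos hb, sumWords_cons, hv1 b (fun h => hdisj b hb b h rfl), Nat.add_zero]
              · rw [restrW_neg hb, powLang_support hu hb]
            rw [heq]; exact hu
          · have heq : restrW (q.1.map Prod.fst) (sumWords (u :: ws'))
                = restrW (q.1.map Prod.fst) (sumWords ws') := by
              funext b
              by_cases hb : b ∈ q.1.map Prod.fst
              · have hbE : b ∈ dmeSymbols E := by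
                  simp only [dmeSymbols, List.mem_flatMap]; exact ⟨q, hq', hb⟩
                have hbp : b ∉ p.1.map Prod.fst := fun h => hdisj b h b hbE rfl
                rw [restrW_pos hb, restrW_pos hb, sumWords_cons, powLang_support hu hbp,
                  Nat.zero_add]
              · rw [restrW_neg hb, restrW_neg hb]
            rw [heq]; exact hv2 q hq'
    · rintro ⟨h1, h2⟩
      set v : UWord α := fun b => if b ∈ p.1.map Prod.fst then 0 else w b with hv
      have hvmem : v ∈ dmeLang E := by
        apply (ih hnd2 v).mpr
        constructor
        · intro b hb
          show (if b ∈ p.1.map Prod.fst then 0 else w b) = 0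
          by_cases hbp : b ∈ p.1.map Prod.fst
          · rw [if_pos hbp]
          · rw [if_neg hbp]
            refine h1 b ?_
            rw [hnd']
            simp only [List.mem_append]
            tauto
        · intro q hq
          have heq : restrW (q.1.map Prod.fst) v = restrW (q.1.map Prod.fst) w := by
            funext b
            by_cases hb : b ∈ q.1.map Prod.fst
            · have hbE : b ∈ dmeSymbols E := by
                simp only [dmeSymbols, List.mem_flatMap]; exact ⟨q, hq, hb⟩
              have hbp : b ∉ p.1.map Prod.fst := fun h => hdisj b h b hbE rfl
              rw [restrW_pos hb, restrW_pos hb]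
              show (if b ∈ p.1.map Prod.fst then 0 else w b) = w b
              rw [if_neg hbp]
            · rw [restrW_neg hb, restrW_neg hb]
          rw [heq]; exact h2 q (List.mem_cons_of_mem p hq)
      obtain ⟨ws, hws, hveq⟩ := hvmem
      refine ⟨restrW (p.1.map Prod.fst) w :: ws,
        List.Forall₂.cons (h2 p List.mem_cons_self) hws, ?_⟩
      funext b
      rw [sumWords_cons, ← hveq]
      by_cases hb : b ∈ p.1.map Prod.fst
      · rw [restrW_pos hb]
        show w b = w b + (if b ∈ p.1.map Prod.fst then 0 else w b)
        rw [if_pos hb, Nat.add_zero]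
      · rw [restrW_neg hb]
        show w b = 0 + (if b ∈ p.1.map Prod.fst then 0 else w b)
        rw [if_neg hb, Nat.zero_add]

lemma syms_sublist {E : DME α} {p : Disj α × Mult} (hp : p ∈ E) :
    (p.1.map Prod.fst).Sublist (dmeSymbols E) := by
  induction E with
  | nil => cases hp
  | cons q E ih =>
    have : dmeSymbols (q :: E) = q.1.map Prod.fst ++ dmeSymbols E := by simp [dmeSymbols]
    rw [this]
    rcases List.mem_cons.mp hp with rfl | hp'
    · exact (List.sublist_append_left _ _)
    · exact (ih hp').trans (List.sublist_append_right _ _)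


/-- Lemma 1: an unordered word belongs to the language of a (normalized)
disjunctive multiplicity expression iff it is consistent with its characterizing triple. -/
theorem dme_membership_iff_consistent_with_triple
    {α : Type} (E : DME α) (hE : Normalized E) (w : UWord α) :
    w ∈ dmeLang E ↔ ConsTriple w (CE E) (NE E) (PE E) := by
  obtain ⟨hnd, hnorm⟩ := hE
  constructor
  · intro hw
    refine ⟨?_, ?_, ?_⟩
    · intro p hp hcon
      exact hp ⟨w, hw, hcon⟩
    · intro a
      exact ⟨w, hw, rfl⟩
    · intro X hX
      exact hX w hw
  · rintro ⟨hC, hN, hP⟩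
    apply (dmeLang_iff E hnd w).mpr
    have wordfact : ∀ w' ∈ dmeLang E, ∀ p ∈ E,
        restrW (p.1.map Prod.fst) w' ∈ powLang (disjLang p.1) p.2 :=
      fun w' hw' => ((dmeLang_iff E hnd w').mp hw').2
    constructor
    · intro b hb
      obtain ⟨w', hw', hwb⟩ := hN b
      have hwb' : w' b = w b := hwb
      rw [← hwb']
      exact ((dmeLang_iff E hnd w').mp hw').1 b hb
    · intro p hp
      obtain ⟨hne, hmul, h0⟩ := hnorm p hp
      have hndp : (p.1.map Prod.fst).Nodup := hnd.sublist (syms_sublist hp)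
      by_cases hone : p.2 = Mult.one
      · rw [hone, powLang_one]
        by_cases hex : ∃ a ∈ p.1.map Prod.fst, w a ≠ 0
        · obtain ⟨a, ha, hwa⟩ := hex
          obtain ⟨w', hw', hwb⟩ := hN a
          have hres := wordfact w' hw' p hp
          rw [hone, powLang_one] at hres
          obtain ⟨⟨a', m'⟩, hm, hs1, hs2⟩ := hres
          have ha'eq : a = a' := by
            by_contra hne'
            have := hs2 a hne'
            rw [restrW_pos ha, hwb] at this
            exact hwa this
          subst ha'eq
          refine ⟨(a, m'), hm, ?_, ?_⟩
          · rw [restrW_pos ha]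
            rw [restrW_pos ha, hwb] at hs1
            exact hs1
          · intro b hb
            by_cases hbp : b ∈ p.1.map Prod.fst
            · rw [restrW_pos hbp]
              by_contra hwb0
              have hCE : (a, b) ∈ CE E := by
                rintro ⟨w'', hw'', ha'', hb''⟩
                have hres2 := wordfact w'' hw'' p hp
                rw [hone, powLang_one] at hres2
                obtain ⟨⟨c, mc⟩, hmc, hs1c, hs2c⟩ := hres2
                have hac : a = c := by
                  by_contra h
                  have := hs2c a h
                  rw [restrW_pos ha] at this
                  exact ha'' this
                have hbc : b = c := by
                  by_contra h
                  have := hs2c b h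
                  rw [restrW_pos hbp] at this
                  exact hb'' this
                exact hb (hbc.trans hac.symm)
              exact hC (a, b) hCE ⟨hwa, hwb0⟩
            · exact restrW_neg hbp
        · by_cases hz : ∃ q ∈ p.1, (0 : ℕ) ∈ q.2.sem
          · obtain ⟨⟨a, m⟩, hq, h0m⟩ := hz
            push_neg at hex
            refine ⟨(a, m), hq, ?_, ?_⟩
            · rw [restrW_pos (List.mem_map_of_mem (f := Prod.fst) hq)]
              rw [hex a (List.mem_map_of_mem (f := Prod.fst) hq)]
              exact h0m
            · intro b hb
              by_cases hbp : b ∈ p.1.map Prod.fst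
              · rw [restrW_pos hbp]; exact hex b hbp
              · exact restrW_neg hbp
          · exfalso
            push_neg at hz hex
            have hXP : {a | a ∈ p.1.map Prod.fst} ∈ PE E := by
              intro w' hw'
              have hres := wordfact w' hw' p hp
              rw [hone, powLang_one] at hres
              obtain ⟨⟨a, m⟩, hm, hs1, hs2⟩ := hres
              have ha : a ∈ p.1.map Prod.fst := List.mem_map_of_mem (f := Prod.fst) hm
              refine ⟨a, ha, ?_⟩
              rw [restrW_pos ha] at hs1
              intro h0'
              rw [h0'] at hs1
              exact hz (a, m) hm hs1
            obtain ⟨a, ha, hwa⟩ := hP _ hXP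
            exact hwa (hex a ha)
      · obtain ⟨hplus, hall⟩ := hmul hone
        rw [hplus, powLang_plus hall hndp]
        refine ⟨fun b hb => restrW_neg hb, ?_⟩
        have hXP : {a | a ∈ p.1.map Prod.fst} ∈ PE E := by
          intro w' hw'
          have hres := wordfact w' hw' p hp
          rw [hplus, powLang_plus hall hndp] at hres
          obtain ⟨-, a, ha, hne'⟩ := hres
          refine ⟨a, ha, ?_⟩
          rw [restrW_pos ha] at hne'
          exact hne'
        obtain ⟨a, ha, hwa⟩ := hP _ hXP
        refine ⟨a, ha, ?_⟩
        rw [restrW_pos ha]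
        exact hwa
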